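/- Let Ω = (0,∞) with its Borel σ-field, P a probability measure on Ω equivalent to Lebesgue measure, and ξ the identity random variable ξ(ω) = ω. Let K = {(α, β) ∈ ℝ² : 0 ≤ β ≤ √α ≤ 1} and C = {1 − α + (α + β)ξ : (α, β) ∈ K} ⊆ L0+. Then the constant random variable 1 is a maximal element of C but is not an outer support point of C: there exists no σ-finite nonnegative measure μ ≪ P with 0 < sup_{f ∈ C} ∫ f dμ = ∫ 1 dμ < ∞. In particular, the inclusion C^osp ⊆ C^max is strict for this convex and compact set C. -/

import Mathlib

open MeasureTheory Filter Set

noncomputable section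

variable {Ω : Type*} [MeasurableSpace Ω]

/-- The nonnegative orthant `L⁰₊` of the space `L⁰` of (a.e.-equivalence classes of)
random variables over `(Ω, ℱ, P)`. -/
def L0plus (P : Measure Ω) : Set (Ω →ₘ[P] ℝ) := {f | 0 ≤ f}

/-- The metric `(f, g) ↦ E[1 ∧ |f - g|]` inducing the topology of convergence
in probability on `L⁰`. -/
def dist0 (P : Measure Ω) (f g : Ω →ₘ[P] ℝ) : ℝ :=
  ∫ ω, min 1 |f ω - g ω| ∂P

/-- Convergence in probability of a sequence in `L⁰`. -/
def Tendsto0 (P : Measure Ω) (f : ℕ → Ω →ₘ[P] ℝ) (g : Ω →ₘ[P] ℝ) : Prop :=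
  Tendsto (fun n => dist0 P (f n) g) atTop (nhds 0)

/-- Closure of a set in `L⁰` with respect to the topology of convergence in probability. -/
def closure0 (P : Measure Ω) (C : Set (Ω →ₘ[P] ℝ)) : Set (Ω →ₘ[P] ℝ) :=
  {f | ∀ ε : ℝ, 0 < ε → ∃ g ∈ C, dist0 P f g < ε}

/-- A set of `L⁰` is closed iff it contains its closure. -/
def IsClosed0 (P : Measure Ω) (C : Set (Ω →ₘ[P] ℝ)) : Prop :=
  closure0 P C ⊆ C

/-- Boundedness (in probability) of a set `C ⊆ L⁰₊` : `lim_{ℓ → ∞} sup_{f ∈ C} P[f > ℓ] = 0`. -/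
def Bounded0 (P : Measure Ω) (C : Set (Ω →ₘ[P] ℝ)) : Prop :=
  Tendsto (fun ℓ : ℝ => ⨆ f ∈ C, P {ω | ℓ < f ω}) atTop (nhds 0)

/-- The set `C^max` of maximal elements of `C ⊆ L⁰₊` : `f ∈ C` such that `f ≤ g` a.s.
and `g ∈ C` imply `f = g` a.s. -/
def maxSet (P : Measure Ω) (C : Set (Ω →ₘ[P] ℝ)) : Set (Ω →ₘ[P] ℝ) :=
  {f | f ∈ C ∧ ∀ g ∈ C, f ≤ g → f = g}

/-- `C` is max-closed if every maximal element of its closure already belongs to `C`. -/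
def MaxClosed (P : Measure Ω) (C : Set (Ω →ₘ[P] ℝ)) : Prop :=
  maxSet P (closure0 P C) ⊆ C

/-- The pairing `⟨μ, f⟩ = ∫ f dμ ∈ [0, ∞]` between a nonnegative measure `μ` and `f ∈ L⁰₊`. -/
def pairing {P : Measure Ω} (μ : Measure Ω) (f : Ω →ₘ[P] ℝ) : ENNReal :=
  ∫⁻ ω, ENNReal.ofReal (f ω) ∂μ

/-- The set `C^osp` of outer support points of `C ⊆ L⁰₊`: points `g ∈ C^max` for which there
is a σ-finite nonnegative measure `μ ≪ P` with `0 < sup_{f ∈ C} ⟨μ, f⟩ = ⟨μ, g⟩ < ∞`;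
by convention `{0}^osp = {0}`. -/
def osp (P : Measure Ω) (C : Set (Ω →ₘ[P] ℝ)) : Set (Ω →ₘ[P] ℝ) :=
  {g | g ∈ maxSet P C ∧
    (C = {0} ∨ ∃ μ : Measure Ω, μ ≪ P ∧ SigmaFinite μ ∧
      0 < pairing μ g ∧ pairing μ g < ⊤ ∧ (⨆ f ∈ C, pairing μ f) = pairing μ g)}

/-- The solid hull of `C ⊆ L⁰₊`. -/
def solidHull (P : Measure Ω) (C : Set (Ω →ₘ[P] ℝ)) : Set (Ω →ₘ[P] ℝ) :=
  {f | f ∈ L0plus P ∧ ∃ g ∈ C, f ≤ g}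

/-- A set `S ⊆ L⁰₊` is solid if `g ∈ S` and `0 ≤ f ≤ g` imply `f ∈ S`. -/
def Solid (P : Measure Ω) (S : Set (Ω →ₘ[P] ℝ)) : Prop :=
  ∀ g ∈ S, ∀ f : Ω →ₘ[P] ℝ, 0 ≤ f → f ≤ g → f ∈ S

/-- `(g n)` is a sequence of forward convex combinations of `(f n)`. -/
def ForwardConvexComb (P : Measure Ω) (f g : ℕ → Ω →ₘ[P] ℝ) : Prop :=
  ∀ n : ℕ, g n ∈ convexHull ℝ (f '' Set.Ici n)

end

noncomputable section

/-- The sample space `Ω = (0, ∞)` with its Borel σ-field. -/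
abbrev OmegaInf : Type := Set.Ioi (0:ℝ)

/-- Lebesgue measure on `(0, ∞)`. -/
noncomputable def LebInf : Measure OmegaInf :=
  (volume : Measure ℝ).comap Subtype.val

/-- The identity random variable `ξ(ω) = ω`, as an element of `L⁰`. -/
noncomputable def xi (P : Measure OmegaInf) : OmegaInf →ₘ[P] ℝ :=
  AEEqFun.mk (fun ω => (ω : ℝ)) measurable_subtype_coe.aestronglyMeasurable

/-- `K = {(α, β) ∈ ℝ² : 0 ≤ β ≤ √α ≤ 1}` (with `α ≥ 0`). -/
def Kset : Set (ℝ × ℝ) :=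
  {p | 0 ≤ p.1 ∧ 0 ≤ p.2 ∧ p.2 ≤ Real.sqrt p.1 ∧ Real.sqrt p.1 ≤ 1}

/-- The random variable `1 - α + (α + β) ξ`, as an element of `L⁰`. -/
noncomputable def elt (P : Measure OmegaInf) (a b : ℝ) : OmegaInf →ₘ[P] ℝ :=
  AEEqFun.const OmegaInf (1 - a) + (a + b) • xi P

/-- The set `C = {1 - α + (α + β) ξ : (α, β) ∈ K} ⊆ L⁰₊`. -/
noncomputable def Cex (P : Measure OmegaInf) : Set (OmegaInf →ₘ[P] ℝ) :=
  {h | ∃ p ∈ Kset, h = elt P p.1 p.2}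

/-- The constant random variable `1`, as an element of `L⁰`. -/
noncomputable def oneL (P : Measure OmegaInf) : OmegaInf →ₘ[P] ℝ :=
  AEEqFun.const OmegaInf (1 : ℝ)

end

noncomputable section AuxProof

open MeasureTheory Filter Set ENNReal

lemma xi_coe (P : Measure OmegaInf) : (xi P : OmegaInf → ℝ) =ᵐ[P] fun ω => (ω : ℝ) :=
  AEEqFun.coeFn_mk _ _

lemma oneL_coe (P : Measure OmegaInf) : (oneL P : OmegaInf → ℝ) =ᵐ[P] fun _ => (1 : ℝ) :=
  AEEqFun.coeFn_const _ _

lemma elt_coe (P : Measure OmegaInf) (a b : ℝ) :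
    (elt P a b : OmegaInf → ℝ) =ᵐ[P] fun ω => 1 - a + (a + b) * (ω : ℝ) := by
  filter_upwards [AEEqFun.coeFn_add (AEEqFun.const OmegaInf (1 - a)) ((a + b) • xi P),
    AEEqFun.coeFn_smul (a + b) (xi P), AEEqFun.coeFn_const OmegaInf (1 - a),
    xi_coe P] with ω h1 h2 h3 h4
  show elt P a b ω = _
  simp only [elt]
  rw [h1, Pi.add_apply]
  simp [h2, h3, h4]

lemma elt_zero (P : Measure OmegaInf) : elt P 0 0 = oneL P := by
  simp [elt, oneL]

lemma elt_mem_Cex {P : Measure OmegaInf} {a b : ℝ} (h : (a, b) ∈ Kset) :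
    elt P a b ∈ Cex P := ⟨(a, b), h, rfl⟩

lemma zero_zero_mem_Kset : ((0 : ℝ), (0 : ℝ)) ∈ Kset := by
  refine ⟨le_refl 0, le_refl 0, ?_, ?_⟩ <;> simp [Kset, Real.sqrt_zero]

lemma oneL_mem_Cex (P : Measure OmegaInf) : oneL P ∈ Cex P :=
  (elt_zero P) ▸ elt_mem_Cex zero_zero_mem_Kset

/-- Positive-measure interval near 0. -/
lemma P_pos_of_lt {P : Measure OmegaInf} (hLP : LebInf ≪ P) {c : ℝ} (hc : 0 < c) :
    P {ω : OmegaInf | (ω : ℝ) < c} ≠ 0 := by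
  intro h0
  have hL : LebInf {ω : OmegaInf | (ω : ℝ) < c} = 0 := hLP h0
  have hemb : MeasurableEmbedding (Subtype.val : OmegaInf → ℝ) :=
    MeasurableEmbedding.subtype_coe measurableSet_Ioi
  have hveq : LebInf {ω : OmegaInf | (ω : ℝ) < c} =
      (volume : Measure ℝ) (Subtype.val '' {ω : OmegaInf | (ω : ℝ) < c}) :=
    hemb.comap_apply (volume : Measure ℝ) _
  have hL2 : (volume : Measure ℝ) (Subtype.val '' {ω : OmegaInf | (ω : ℝ) < c}) = 0 := by
    rw [← hveq]
    exact hL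
  have himg : (Subtype.val '' {ω : OmegaInf | (ω : ℝ) < c}) = Ioo 0 c := by
    ext x
    constructor
    · rintro ⟨⟨y, hy⟩, hlt, rfl⟩
      exact ⟨hy, hlt⟩
    · rintro ⟨hx0, hxc⟩
      exact ⟨⟨x, hx0⟩, hxc, rfl⟩
  rw [himg, Real.volume_Ioo] at hL2
  simp only [sub_zero] at hL2
  exact (ENNReal.ofReal_pos.mpr hc).ne' hL2

/-- Maximality: if `1 ≤ elt a b` a.e. and `(a,b) ∈ K`, then `a = 0` and `b = 0`. -/
lemma max_key {P : Measure OmegaInf} [IsProbabilityMeasure P] (hLP : LebInf ≪ P)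
    {a b : ℝ} (hK : (a, b) ∈ Kset) (hle : oneL P ≤ elt P a b) : a = 0 ∧ b = 0 := by
  obtain ⟨ha, hb, hbs, hs1⟩ := hK
  have hcoe : ∀ᵐ ω : OmegaInf ∂P, (1 : ℝ) ≤ 1 - a + (a + b) * (ω : ℝ) := by
    have h := AEEqFun.coeFn_le.mpr hle
    filter_upwards [h, oneL_coe P, elt_coe P a b] with ω h1 h2 h3
    rw [h2, h3] at h1
    exact h1
  have ha0 : a = 0 := by
    by_contra hane
    have hapos : 0 < a := lt_of_le_of_ne ha (Ne.symm hane)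
    have habpos : 0 < a + b := by linarith
    set c := a / (a + b) with hc
    have hcpos : 0 < c := div_pos hapos habpos
    have hsub : {ω : OmegaInf | (ω : ℝ) < c} ⊆
        {ω : OmegaInf | ¬ ((1 : ℝ) ≤ 1 - a + (a + b) * (ω : ℝ))} := by
      intro ω hω
      simp only [mem_setOf_eq, not_le] at hω ⊢
      have : (a + b) * (ω : ℝ) < a := by
        have := (lt_div_iff₀ habpos).mp hω
        linarith [mul_comm (a + b) (ω : ℝ)]
      linarith
    have hnull : P {ω : OmegaInf | ¬ ((1 : ℝ) ≤ 1 - a + (a + b) * (ω : ℝ))} = 0 := by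
      rw [← ae_iff] at *
      exact hcoe
    exact P_pos_of_lt hLP hcpos (measure_mono_null hsub hnull)
  have hb0 : b = 0 := by
    have : b ≤ 0 := by
      rw [ha0] at hbs
      simpa [Real.sqrt_zero] using hbs
    linarith
  exact ⟨ha0, hb0⟩

lemma oneL_maximal (P : Measure OmegaInf) [IsProbabilityMeasure P] (hLP : LebInf ≪ P) :
    oneL P ∈ maxSet P (Cex P) := by
  refine ⟨oneL_mem_Cex P, ?_⟩
  rintro g ⟨⟨a, b⟩, hK, rfl⟩ hle
  obtain ⟨ha, hb⟩ := max_key hLP hK hle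
  rw [ha, hb, elt_zero]

lemma pairing_oneL {P : Measure OmegaInf} (μ : Measure OmegaInf) (hμP : μ ≪ P) :
    pairing μ (oneL P) = μ Set.univ := by
  unfold pairing
  rw [lintegral_congr_ae (((oneL_coe P).mono (fun ω h => by rw [h])).filter_mono hμP.ae_le)]
  simp

lemma pairing_elt {P : Measure OmegaInf} (μ : Measure OmegaInf) (hμP : μ ≪ P)
    {a b : ℝ} (ha0 : 0 ≤ a) (ha1 : a ≤ 1) (hb : 0 ≤ b) :
    pairing μ (elt P a b) =
      ENNReal.ofReal (1 - a) * μ Set.univ +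
        ENNReal.ofReal (a + b) * ∫⁻ ω, ENNReal.ofReal (ω : ℝ) ∂μ := by
  unfold pairing
  have hmeas : Measurable (fun ω : OmegaInf => ENNReal.ofReal (ω : ℝ)) :=
    measurable_subtype_coe.ennreal_ofReal
  have hstep : ∀ᵐ ω ∂μ, ENNReal.ofReal ((elt P a b) ω) =
      ENNReal.ofReal (1 - a) + ENNReal.ofReal (a + b) * ENNReal.ofReal (ω : ℝ) := by
    filter_upwards [(elt_coe P a b).filter_mono hμP.ae_le] with ω h
    rw [h]
    have hω : (0 : ℝ) ≤ (ω : ℝ) := le_of_lt ω.2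
    rw [ENNReal.ofReal_add (by linarith) (mul_nonneg (by linarith) hω),
      ENNReal.ofReal_mul (by linarith)]
  rw [lintegral_congr_ae hstep, lintegral_add_left measurable_const,
    lintegral_const, lintegral_const_mul _ hmeas]

lemma I_pos {μ : Measure OmegaInf} (hμ : μ Set.univ ≠ 0) :
    0 < ∫⁻ ω, ENNReal.ofReal (ω : ℝ) ∂μ := by
  rw [pos_iff_ne_zero]
  intro h0
  have hmeas : Measurable (fun ω : OmegaInf => ENNReal.ofReal (ω : ℝ)) :=
    measurable_subtype_coe.ennreal_ofReal
  have hae := (lintegral_eq_zero_iff hmeas).mp h0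
  rw [Filter.EventuallyEq, ae_iff] at hae
  refine hμ (le_antisymm ?_ zero_le)
  rw [← hae]
  refine measure_mono fun ω _ => ?_
  simp only [mem_setOf_eq, Pi.zero_apply]
  exact (ENNReal.ofReal_pos.mpr ω.2).ne'

lemma no_support (P : Measure OmegaInf) [IsProbabilityMeasure P] :
    ¬ ∃ μ : Measure OmegaInf, μ ≪ P ∧ SigmaFinite μ ∧
        0 < pairing μ (oneL P) ∧ pairing μ (oneL P) < ⊤ ∧
        (⨆ f ∈ Cex P, pairing μ f) = pairing μ (oneL P) := by
  rintro ⟨μ, hμP, _, hpos, hfin, hsup⟩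
  rw [pairing_oneL μ hμP] at hpos hfin hsup
  set M := μ Set.univ with hM
  set I := ∫⁻ ω, ENNReal.ofReal (ω : ℝ) ∂μ with hI
  have hIpos : 0 < I := I_pos hpos.ne'
  have key : ∀ a b : ℝ, (a, b) ∈ Kset →
      ENNReal.ofReal (1 - a) * M + ENNReal.ofReal (a + b) * I ≤ M := by
    intro a b hK
    have ha1 : a ≤ 1 := by
      have := hK.2.2.2
      nlinarith [Real.sq_sqrt hK.1, Real.sqrt_nonneg a]
    rw [← pairing_elt μ hμP hK.1 ha1 hK.2.1, ← hsup]
    exact le_iSup₂_of_le (elt P a b) (elt_mem_Cex hK) le_rfl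
  -- case I = ∞
  have hKone : ((1 : ℝ), (1 : ℝ)) ∈ Kset := by
    refine ⟨zero_le_one, zero_le_one, ?_, ?_⟩ <;> simp [Kset, Real.sqrt_one]
  have hIfin : I ≠ ⊤ := by
    intro hItop
    have := key 1 1 hKone
    rw [hItop] at this
    have h2 : ENNReal.ofReal ((1 : ℝ) + 1) ≠ 0 :=
      (ENNReal.ofReal_pos.mpr (by norm_num)).ne'
    rw [ENNReal.mul_top h2] at this
    exact hfin.ne (top_le_iff.mp (le_trans le_add_self this))
  -- real versions
  set m := M.toReal with hm
  set i := I.toReal with hi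
  have hmpos : 0 < m := ENNReal.toReal_pos hpos.ne' hfin.ne
  have hipos : 0 < i := ENNReal.toReal_pos hIpos.ne' hIfin
  set t := i / (m + i) with ht
  have htpos : 0 < t := div_pos hipos (by linarith)
  have htlt : t < 1 := by
    rw [div_lt_one (by linarith)]
    linarith
  have hteq : t * (m + i) = i := by
    rw [ht]
    exact div_mul_cancel₀ i (by linarith : m + i ≠ 0)
  have hsq : Real.sqrt (t ^ 2) = t := Real.sqrt_sq htpos.le
  have hKt : ((t ^ 2 : ℝ), t) ∈ Kset :=
    ⟨sq_nonneg t, htpos.le, le_of_eq hsq.symm, by rw [hsq]; exact htlt.le⟩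
  have hkey := key (t ^ 2) t hKt
  -- convert to reals
  have hLfin : ENNReal.ofReal (1 - t ^ 2) * M ≠ ⊤ :=
    ENNReal.mul_ne_top ENNReal.ofReal_ne_top hfin.ne
  have hRfin : ENNReal.ofReal (t ^ 2 + t) * I ≠ ⊤ :=
    ENNReal.mul_ne_top ENNReal.ofReal_ne_top hIfin
  have hreal := ENNReal.toReal_mono hfin.ne hkey
  rw [ENNReal.toReal_add hLfin hRfin, ENNReal.toReal_mul, ENNReal.toReal_mul,
    ENNReal.toReal_ofReal (by nlinarith), ENNReal.toReal_ofReal (by nlinarith)] at hreal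
  rw [← hm, ← hi] at hreal
  nlinarith [mul_pos (mul_pos htpos htpos) hipos, hteq, hreal]

end AuxProof

/-- For `Ω = (0, ∞)`, `P` a probability equivalent to Lebesgue measure,
and `C = {1 - α + (α + β) ξ : (α, β) ∈ K}`, the constant random variable `1` is a maximal
element of `C` but is not an outer support point of `C`: there is no σ-finite nonnegative
measure `μ ≪ P` with `0 < sup_{f ∈ C} ∫ f dμ = ∫ 1 dμ < ∞`. In particular, the inclusion
`C^osp ⊆ C^max` is strict for this convex and compact set `C`. -/
theorem statement15 (P : Measure OmegaInf) [IsProbabilityMeasure P]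
    (hPL : P ≪ LebInf) (hLP : LebInf ≪ P) :
    oneL P ∈ maxSet P (Cex P) ∧
    (¬ ∃ μ : Measure OmegaInf, μ ≪ P ∧ SigmaFinite μ ∧
        0 < pairing μ (oneL P) ∧ pairing μ (oneL P) < ⊤ ∧
        (⨆ f ∈ Cex P, pairing μ f) = pairing μ (oneL P)) ∧
    oneL P ∉ osp P (Cex P) ∧
    osp P (Cex P) ⊆ maxSet P (Cex P) ∧ osp P (Cex P) ≠ maxSet P (Cex P) := by
  have hmax : oneL P ∈ maxSet P (Cex P) := oneL_maximal P hLP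
  have hnos := no_support P
  have hnotin : oneL P ∉ osp P (Cex P) := by
    rintro ⟨_, hor⟩
    rcases hor with h0 | hex
    · have h1 : oneL P = 0 := by
        have := oneL_mem_Cex P
        rw [h0] at this
        exact this
      have hz : (oneL P : OmegaInf → ℝ) =ᵐ[P] fun _ => (0 : ℝ) := by
        rw [h1]
        exact AEEqFun.coeFn_zero
      have h2 : ∀ᵐ ω ∂P, (1 : ℝ) = 0 := by
        filter_upwards [oneL_coe P, hz] with ω ha hb
        rw [← ha, hb]
      have h3 : P Set.univ = 0 := by
        rw [ae_iff] at h2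
        simpa using h2
      rw [measure_univ] at h3
      exact one_ne_zero h3
    · exact hnos hex
  refine ⟨hmax, hnos, hnotin, fun g hg => hg.1, fun h => ?_⟩
  rw [h] at hnotin
  exact hnotin hmax
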